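/- Let E be a finite-dimensional real normed vector space with geometric structure B, let F : E → ℝ be differentiable with a differentiable left-gradient field gF with respect to B, let φ : ℝ → ℝ be twice differentiable, and let g : E → E be a differentiable left-gradient field of φ ∘ F with respect to B. Then for every x, trace(fderiv ℝ g x) = (deriv φ (F x)) * trace(fderiv ℝ gF x) + (deriv (deriv φ) (F x)) * B x (gF x) (gF x); that is, Δ^L_B (φ ∘ F) = φ'(F) Δ^L_B F + φ''(F) {F, F}_B. The same identity holds with right-gradient fields and the right Laplacian. -/
import Mathlib

lemma trace_smulRight' {E : Type*} [NormedAddCommGroup E] [NormedSpace ℝ E]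
    [FiniteDimensional ℝ E] (f : E →ₗ[ℝ] ℝ) (v : E) :
    LinearMap.trace ℝ E (LinearMap.smulRight f v) = f v := by
  have : LinearMap.smulRight f v = (LinearMap.toSpanSingleton ℝ E v).comp f := by
    ext w; simp [LinearMap.toSpanSingleton_apply, smul_eq_mul, mul_comm]
  rw [this, LinearMap.trace_comp_comm']
  have : f.comp (LinearMap.toSpanSingleton ℝ E v) = (f v) • LinearMap.id := by
    ext; simp [LinearMap.toSpanSingleton_apply]
  rw [this, map_smul, LinearMap.trace_id, smul_eq_mul]
  simp

lemma fderiv_real_apply {f : ℝ → ℝ} (x : ℝ) (t : ℝ) (hf : DifferentiableAt ℝ f x) :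
    fderiv ℝ f x t = t * deriv f x := by
  rw [← fderiv_apply_one_eq_deriv]
  have : t = t • (1 : ℝ) := by simp
  rw [this, map_smul]
  simp

lemma core_lemma {E : Type*} [NormedAddCommGroup E] [NormedSpace ℝ E] [FiniteDimensional ℝ E]
    (φ : ℝ → ℝ) (hφ : Differentiable ℝ φ) (hφ' : Differentiable ℝ (deriv φ))
    (F : E → ℝ) (hF : Differentiable ℝ F)
    (gF : E → E) (hgF : Differentiable ℝ gF)
    (g : E → E) (heq : ∀ x, g x = deriv φ (F x) • gF x) (x : E) :
    LinearMap.trace ℝ E (fderiv ℝ g x).toLinearMap =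
      deriv φ (F x) * LinearMap.trace ℝ E (fderiv ℝ gF x).toLinearMap +
      deriv (deriv φ) (F x) * fderiv ℝ F x (gF x) := by
  have hgfun : g = fun y => (deriv φ ∘ F) y • gF y := funext heq
  have hc : DifferentiableAt ℝ (deriv φ ∘ F) x := (hφ'.comp hF).differentiableAt
  have hd : fderiv ℝ g x = (deriv φ ∘ F) x • fderiv ℝ gF x
      + (fderiv ℝ (deriv φ ∘ F) x).smulRight (gF x) := by
    rw [hgfun]; exact fderiv_smul hc (hgF x)
  have hc' : fderiv ℝ (deriv φ ∘ F) x (gF x) = deriv (deriv φ) (F x) * fderiv ℝ F x (gF x) := by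
    rw [fderiv_comp x (hφ' (F x)) (hF x)]
    simp only [ContinuousLinearMap.coe_comp', Function.comp_apply]
    rw [fderiv_real_apply (F x) _ (hφ' (F x)), mul_comm]
  rw [hd]
  have : ((deriv φ ∘ F) x • fderiv ℝ gF x
      + (fderiv ℝ (deriv φ ∘ F) x).smulRight (gF x)).toLinearMap
      = (deriv φ ∘ F) x • (fderiv ℝ gF x).toLinearMap
      + LinearMap.smulRight (fderiv ℝ (deriv φ ∘ F) x).toLinearMap (gF x) := by
    ext w; simp
  rw [this, map_add, map_smul, trace_smulRight', smul_eq_mul]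
  simp only [Function.comp_apply, ContinuousLinearMap.coe_coe]
  rw [hc']

/-- Chain rule for Laplace-like operators:
`Δ^{L/R}_B (φ ∘ F) = φ'(F) Δ^{L/R}_B F + φ''(F) {F, F}_B`. -/
theorem laplacian_chain_rule
    {E : Type*} [NormedAddCommGroup E] [NormedSpace ℝ E] [FiniteDimensional ℝ E]
    (B : E → (E →ₗ[ℝ] E →ₗ[ℝ] ℝ))
    (hB1 : ∀ x v, (∀ w, B x v w = 0) → v = 0)
    (hB2 : ∀ x w, (∀ v, B x v w = 0) → w = 0)
    (φ : ℝ → ℝ) (hφ : Differentiable ℝ φ) (hφ' : Differentiable ℝ (deriv φ))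
    (F : E → ℝ) (hF : Differentiable ℝ F) :
    (∀ gF g : E → E, Differentiable ℝ gF → Differentiable ℝ g →
      (∀ x w, B x (gF x) w = fderiv ℝ F x w) →
      (∀ x w, B x (g x) w = fderiv ℝ (φ ∘ F) x w) →
      ∀ x, LinearMap.trace ℝ E (fderiv ℝ g x).toLinearMap =
        deriv φ (F x) * LinearMap.trace ℝ E (fderiv ℝ gF x).toLinearMap +
        deriv (deriv φ) (F x) * B x (gF x) (gF x)) ∧
    (∀ gF g : E → E, Differentiable ℝ gF → Differentiable ℝ g →
      (∀ x w, B x w (gF x) = fderiv ℝ F x w) →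
      (∀ x w, B x w (g x) = fderiv ℝ (φ ∘ F) x w) →
      ∀ x, LinearMap.trace ℝ E (fderiv ℝ g x).toLinearMap =
        deriv φ (F x) * LinearMap.trace ℝ E (fderiv ℝ gF x).toLinearMap +
        deriv (deriv φ) (F x) * B x (gF x) (gF x)) := by
  have hcomp : ∀ x w, fderiv ℝ (φ ∘ F) x w = deriv φ (F x) * fderiv ℝ F x w := by
    intro x w
    rw [fderiv_comp x (hφ (F x)) (hF x)]
    simp only [ContinuousLinearMap.coe_comp', Function.comp_apply]
    rw [fderiv_real_apply (F x) _ (hφ (F x)), mul_comm]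
  constructor
  · intro gF g hgF hg hgradF hgrad x
    have heq : ∀ y, g y = deriv φ (F y) • gF y := by
      intro y
      have h0 : ∀ w, B y (g y - deriv φ (F y) • gF y) w = 0 := by
        intro w
        simp only [map_sub, map_smul, LinearMap.sub_apply, LinearMap.smul_apply,
          smul_eq_mul, hgrad, hgradF, hcomp, sub_self]
      exact sub_eq_zero.mp (hB1 y _ h0)
    rw [core_lemma φ hφ hφ' F hF gF hgF g heq x, hgradF x (gF x)]
  · intro gF g hgF hg hgradF hgrad x
    have heq : ∀ y, g y = deriv φ (F y) • gF y := by
      intro y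
      have h0 : ∀ v, B y v (g y - deriv φ (F y) • gF y) = 0 := by
        intro v
        simp only [map_sub, map_smul, smul_eq_mul, hgrad, hgradF, hcomp, sub_self]
      exact sub_eq_zero.mp (hB2 y _ h0)
    rw [core_lemma φ hφ hφ' F hF gF hgF g heq x, hgradF x (gF x)]
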